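/- For every vertex v ∈ V and every t ≥ 0, the occupancy process and the deterministic process started at x(0) satisfy |E X_v(t+1) − x_v(t+1)| ≤ |E X_v(t) − x_v(t)| + M · E|X_{N_v}(t) − x_{N_v}(t)|. -/

import Mathlib

open MeasureTheory Finset

noncomputable section

/-- Real value of a Boolean state. -/
def b2r (b : Bool) : ℝ := if b then 1 else 0

/-- Neighborhood average `y_{N_v} = (deg v)⁻¹ ∑_{w ∈ N_v} y_w`. -/
def nbrAvg {V : Type} [Fintype V] (G : SimpleGraph V) [DecidableRel G.Adj]
    (y : V → ℝ) (v : V) : ℝ :=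
  (∑ w ∈ G.neighborFinset v, y w) / (G.degree v : ℝ)

/-- `γ(a,b) = a(1 - f(b)) + (1 - a) g(b)`. -/
def gam (f g : ℝ → ℝ) (a b : ℝ) : ℝ := a * (1 - f b) + (1 - a) * g b

/-- One-step transition measure of the occupancy process: from state `X`, the
coordinates of the next state are independent Bernoulli with success
probability `γ(X_v, X_{N_v})`; this is the corresponding product measure on
`V → Bool`, written out by its mass function. -/
def stepMeasure {V : Type} [Fintype V] [DecidableEq V] (G : SimpleGraph V)
    [DecidableRel G.Adj] (f g : ℝ → ℝ) (X : V → Bool) : Measure (V → Bool) :=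
  ∑ y : V → Bool,
    ENNReal.ofReal (∏ v,
        (if y v then gam f g (b2r (X v)) (nbrAvg G (fun w => b2r (X w)) v)
         else 1 - gam f g (b2r (X v)) (nbrAvg G (fun w => b2r (X w)) v)))
      • Measure.dirac y

/-- Law of the occupancy process at time `t`, started (a.s.) at `x0`. -/
def law {V : Type} [Fintype V] [DecidableEq V] (G : SimpleGraph V)
    [DecidableRel G.Adj] (f g : ℝ → ℝ) (x0 : V → Bool) : ℕ → Measure (V → Bool)
  | 0 => Measure.dirac x0
  | t + 1 => (law G f g x0 t).bind (stepMeasure G f g)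

/-- The deterministic process `x(t+1)_v = γ(x(t)_v, x(t)_{N_v})`. -/
def det {V : Type} [Fintype V] (G : SimpleGraph V) [DecidableRel G.Adj]
    (f g : ℝ → ℝ) (x0 : V → ℝ) : ℕ → V → ℝ
  | 0 => x0
  | t + 1 => fun v => gam f g (det G f g x0 t v) (nbrAvg G (det G f g x0 t) v)

-- ## auxiliary lemmas

lemma b2r_mem (b : Bool) : b2r b ∈ Set.Icc (0:ℝ) 1 := by
  cases b <;> simp [b2r]

lemma nbrAvg_mem {V : Type} [Fintype V] (G : SimpleGraph V) [DecidableRel G.Adj]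
    {y : V → ℝ} (hy : ∀ w, y w ∈ Set.Icc (0:ℝ) 1) {v : V} (hv : 0 < G.degree v) :
    nbrAvg G y v ∈ Set.Icc (0:ℝ) 1 := by
  have hd : (0:ℝ) < (G.degree v : ℝ) := by exact_mod_cast hv
  have h1 : (0:ℝ) ≤ ∑ w ∈ G.neighborFinset v, y w :=
    Finset.sum_nonneg fun w _ => (hy w).1
  have h2 : ∑ w ∈ G.neighborFinset v, y w ≤ (G.degree v : ℝ) := by
    calc ∑ w ∈ G.neighborFinset v, y w ≤ ∑ _w ∈ G.neighborFinset v, (1:ℝ) :=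
          Finset.sum_le_sum fun w _ => (hy w).2
      _ = (G.degree v : ℝ) := by
          rw [Finset.sum_const, nsmul_eq_mul, mul_one, SimpleGraph.card_neighborFinset_eq_degree]
  unfold nbrAvg
  exact ⟨div_nonneg h1 hd.le, by rw [div_le_one hd]; exact h2⟩

lemma gam_mem {f g : ℝ → ℝ}
    (hf01 : ∀ a ∈ Set.Icc (0:ℝ) 1, f a ∈ Set.Icc (0:ℝ) 1)
    (hg01 : ∀ a ∈ Set.Icc (0:ℝ) 1, g a ∈ Set.Icc (0:ℝ) 1)
    {a b : ℝ} (ha : a ∈ Set.Icc (0:ℝ) 1) (hb : b ∈ Set.Icc (0:ℝ) 1) :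
    gam f g a b ∈ Set.Icc (0:ℝ) 1 := by
  obtain ⟨hf0, hf1⟩ := hf01 b hb
  obtain ⟨hg0, hg1⟩ := hg01 b hb
  obtain ⟨ha0, ha1⟩ := ha
  exact ⟨by unfold gam; nlinarith, by unfold gam; nlinarith⟩

lemma det_mem {V : Type} [Fintype V] (G : SimpleGraph V) [DecidableRel G.Adj]
    (hdeg : ∀ v : V, 0 < G.degree v) {f g : ℝ → ℝ}
    (hf01 : ∀ a ∈ Set.Icc (0:ℝ) 1, f a ∈ Set.Icc (0:ℝ) 1)
    (hg01 : ∀ a ∈ Set.Icc (0:ℝ) 1, g a ∈ Set.Icc (0:ℝ) 1)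
    {x0 : V → ℝ} (hx0 : ∀ w, x0 w ∈ Set.Icc (0:ℝ) 1) :
    ∀ t w, det G f g x0 t w ∈ Set.Icc (0:ℝ) 1 := by
  intro t
  induction t with
  | zero => exact hx0
  | succ t ih =>
    intro w
    exact gam_mem hf01 hg01 (ih w) (nbrAvg_mem G ih (hdeg w))

lemma sum_prod_bool {V : Type} [Fintype V] [DecidableEq V] (F : V → Bool → ℝ) :
    ∑ y : V → Bool, ∏ v, F v (y v) = ∏ v, (F v true + F v false) := by
  rw [← Fintype.prod_sum]
  exact Finset.prod_congr rfl fun v _ => by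
    rw [Fintype.sum_bool]

section Main

variable {V : Type} [Fintype V] [DecidableEq V]
    (G : SimpleGraph V) [DecidableRel G.Adj]
    (f g : ℝ → ℝ)

def gm (X : V → Bool) (v : V) : ℝ :=
  gam f g (b2r (X v)) (nbrAvg G (fun w => b2r (X w)) v)

def pm (X y : V → Bool) : ℝ :=
  ∏ v, (if y v then gm G f g X v else 1 - gm G f g X v)

variable (hdeg : ∀ v : V, 0 < G.degree v)
    (hf01 : ∀ a ∈ Set.Icc (0:ℝ) 1, f a ∈ Set.Icc (0:ℝ) 1)
    (hg01 : ∀ a ∈ Set.Icc (0:ℝ) 1, g a ∈ Set.Icc (0:ℝ) 1)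

include hdeg hf01 hg01

lemma gm_mem (X : V → Bool) (v : V) : gm G f g X v ∈ Set.Icc (0:ℝ) 1 :=
  gam_mem hf01 hg01 (b2r_mem _) (nbrAvg_mem G (fun w => b2r_mem _) (hdeg v))

lemma pm_nonneg (X y : V → Bool) : 0 ≤ pm G f g X y := by
  refine Finset.prod_nonneg fun v _ => ?_
  obtain ⟨h0, h1⟩ := gm_mem G f g hdeg hf01 hg01 X v
  split <;> linarith

lemma pm_sum (X : V → Bool) : ∑ y : V → Bool, pm G f g X y = 1 := by
  refine (sum_prod_bool fun v b => if b then gm G f g X v else 1 - gm G f g X v).trans ?_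
  simp

set_option maxHeartbeats 1000000 in
lemma pm_marginal (X : V → Bool) (v : V) :
    ∑ y : V → Bool, pm G f g X y * b2r (y v) = gm G f g X v := by
  have key : ∀ y : V → Bool, pm G f g X y * b2r (y v)
      = ∏ w, (fun w b => (if w = v then b2r b else 1) *
          (if b then gm G f g X w else 1 - gm G f g X w)) w (y w) := by
    intro y
    show _ = ∏ w, (if w = v then b2r (y w) else 1) *
          (if y w then gm G f g X w else 1 - gm G f g X w)
    rw [Finset.prod_mul_distrib, Finset.prod_ite_eq']
    simp [pm, mul_comm]
  calc ∑ y : V → Bool, pm G f g X y * b2r (y v)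
      = ∑ y : V → Bool, ∏ w, (fun w b => (if w = v then b2r b else 1) *
          (if b then gm G f g X w else 1 - gm G f g X w)) w (y w) :=
        Finset.sum_congr rfl fun y _ => key y
    _ = ∏ w, ((fun w b => (if w = v then b2r b else 1) *
          (if b then gm G f g X w else 1 - gm G f g X w)) w true +
        (fun w b => (if w = v then b2r b else 1) *
          (if b then gm G f g X w else 1 - gm G f g X w)) w false) :=
        sum_prod_bool (fun w b => (if w = v then b2r b else 1) *
          (if b then gm G f g X w else 1 - gm G f g X w))
    _ = ∏ w, if w = v then gm G f g X w else 1 := by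
        refine Finset.prod_congr rfl fun w _ => ?_
        by_cases h : w = v <;> simp [h, b2r]
    _ = gm G f g X v := by rw [Finset.prod_ite_eq']; simp

omit hdeg hf01 hg01 in
lemma stepMeasure_apply (X : V → Bool) (z : V → Bool) :
    stepMeasure G f g X {z} = ENNReal.ofReal (pm G f g X z) := by
  rw [stepMeasure, Measure.finset_sum_apply]
  simp only [Measure.smul_apply, Measure.dirac_apply, smul_eq_mul,
    Set.indicator_apply, Set.mem_singleton_iff, Pi.one_apply, mul_ite, mul_one, mul_zero]
  rw [Finset.sum_ite_eq' Finset.univ z]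
  simp [pm, gm]

lemma stepMeasure_prob (X : V → Bool) :
    IsProbabilityMeasure (stepMeasure G f g X) := by
  constructor
  have : (Finset.univ : Finset (V → Bool)) = Finset.univ := rfl
  have huniv : (Set.univ : Set (V → Bool)) = ⋃ z ∈ (Finset.univ : Finset (V → Bool)), {z} := by
    simp only [Finset.mem_univ, Set.iUnion_true]
    exact (Set.iUnion_of_singleton _).symm
  rw [huniv, measure_biUnion_finset ?_ (fun _ _ => measurableSet_singleton _)]
  · rw [Finset.sum_congr rfl fun z _ => stepMeasure_apply G f g X z,
      ← ENNReal.ofReal_sum_of_nonneg fun z _ => pm_nonneg G f g hdeg hf01 hg01 X z,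
      pm_sum G f g hdeg hf01 hg01 X]
    simp
  · intro a _ b _ hab
    simp [Set.disjoint_singleton, hab]

end Main


section Meas

variable {V : Type} [Fintype V] [DecidableEq V]
    (G : SimpleGraph V) [DecidableRel G.Adj]
    (f g : ℝ → ℝ)
    (hdeg : ∀ v : V, 0 < G.degree v)
    (hf01 : ∀ a ∈ Set.Icc (0:ℝ) 1, f a ∈ Set.Icc (0:ℝ) 1)
    (hg01 : ∀ a ∈ Set.Icc (0:ℝ) 1, g a ∈ Set.Icc (0:ℝ) 1)

lemma measurable_stepMeasure : Measurable (stepMeasure G f g) :=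
  Measurable.of_discrete

include hdeg hf01 hg01

lemma bind_prob (μ : Measure (V → Bool)) [IsProbabilityMeasure μ] :
    IsProbabilityMeasure (μ.bind (stepMeasure G f g)) := by
  constructor
  rw [Measure.bind_apply MeasurableSet.univ (measurable_stepMeasure G f g).aemeasurable]
  have : ∀ X : V → Bool, stepMeasure G f g X Set.univ = 1 := fun X =>
    (stepMeasure_prob G f g hdeg hf01 hg01 X).measure_univ
  simp [this]

lemma law_prob (x0 : V → Bool) (t : ℕ) :
    IsProbabilityMeasure (law G f g x0 t) := by
  induction t with
  | zero => rw [law]; infer_instance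
  | succ t ih => haveI := ih; rw [law]; exact bind_prob G f g hdeg hf01 hg01 _

lemma integral_bind_b2r (μ : Measure (V → Bool)) [IsProbabilityMeasure μ] (v : V) :
    ∫ y, b2r (y v) ∂ (μ.bind (stepMeasure G f g)) = ∫ X, gm G f g X v ∂μ := by
  haveI := bind_prob G f g hdeg hf01 hg01 μ
  rw [integral_fintype .of_finite, integral_fintype .of_finite]
  have hmass : ∀ z : V → Bool, ((μ.bind (stepMeasure G f g)) {z}).toReal
      = ∑ X : V → Bool, (μ {X}).toReal * pm G f g X z := by
    intro z
    rw [Measure.bind_apply (measurableSet_singleton z) (measurable_stepMeasure G f g).aemeasurable,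
      lintegral_fintype]
    rw [ENNReal.toReal_sum (fun X _ => ENNReal.mul_ne_top
      (by rw [stepMeasure_apply]; exact ENNReal.ofReal_ne_top) (measure_ne_top μ _))]
    refine Finset.sum_congr rfl fun X _ => ?_
    rw [ENNReal.toReal_mul, stepMeasure_apply,
      ENNReal.toReal_ofReal (pm_nonneg G f g hdeg hf01 hg01 X z), mul_comm]
  calc ∑ z : V → Bool, ((μ.bind (stepMeasure G f g)) {z}).toReal • b2r (z v)
      = ∑ z : V → Bool, ∑ X : V → Bool, (μ {X}).toReal * (pm G f g X z * b2r (z v)) := by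
        refine Finset.sum_congr rfl fun z _ => ?_
        rw [hmass z, smul_eq_mul, Finset.sum_mul]
        exact Finset.sum_congr rfl fun X _ => by ring
    _ = ∑ X : V → Bool, (μ {X}).toReal * ∑ z : V → Bool, pm G f g X z * b2r (z v) := by
        rw [Finset.sum_comm]
        exact Finset.sum_congr rfl fun X _ => (Finset.mul_sum _ _ _).symm
    _ = ∑ X : V → Bool, (μ {X}).toReal • gm G f g X v := by
        refine Finset.sum_congr rfl fun X _ => ?_
        rw [pm_marginal G f g hdeg hf01 hg01 X v, smul_eq_mul]

end Meas

/-- **One-step mean comparison**: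
`|E X_v(t+1) − x_v(t+1)| ≤ |E X_v(t) − x_v(t)| + M E|X_{N_v}(t) − x_{N_v}(t)|`. -/
theorem mean_one_step_bound
    {V : Type} [Fintype V] [DecidableEq V]
    (G : SimpleGraph V) [DecidableRel G.Adj]
    (hdeg : ∀ v : V, 0 < G.degree v)
    (f g : ℝ → ℝ) (M : ℝ)
    (hf01 : ∀ a ∈ Set.Icc (0:ℝ) 1, f a ∈ Set.Icc (0:ℝ) 1)
    (hg01 : ∀ a ∈ Set.Icc (0:ℝ) 1, g a ∈ Set.Icc (0:ℝ) 1)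
    (hfLip : ∀ a ∈ Set.Icc (0:ℝ) 1, ∀ b ∈ Set.Icc (0:ℝ) 1, |f a - f b| ≤ M * |a - b|)
    (hgLip : ∀ a ∈ Set.Icc (0:ℝ) 1, ∀ b ∈ Set.Icc (0:ℝ) 1, |g a - g b| ≤ M * |a - b|)
    (x0 : V → Bool) (v : V) (t : ℕ) :
    |(∫ y, b2r (y v) ∂ (law G f g x0 (t + 1)))
        - det G f g (fun w => b2r (x0 w)) (t + 1) v|
      ≤ |(∫ y, b2r (y v) ∂ (law G f g x0 t)) - det G f g (fun w => b2r (x0 w)) t v|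
        + M * ∫ y, |nbrAvg G (fun w => b2r (y w)) v
                    - nbrAvg G (det G f g (fun w => b2r (x0 w)) t) v| ∂ (law G f g x0 t) := by
  set μ := law G f g x0 t with hμ
  haveI : IsProbabilityMeasure μ := law_prob G f g hdeg hf01 hg01 x0 t
  set x : V → ℝ := det G f g (fun w => b2r (x0 w)) t with hx
  have hxm : ∀ w, x w ∈ Set.Icc (0:ℝ) 1 :=
    det_mem G hdeg hf01 hg01 (fun w => b2r_mem _) t
  set bx : ℝ := nbrAvg G x v with hbx
  have hbxm : bx ∈ Set.Icc (0:ℝ) 1 := nbrAvg_mem G hxm (hdeg v)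
  -- the law at time t+1 expectation
  have hE : ∫ y, b2r (y v) ∂ (law G f g x0 (t + 1)) = ∫ X, gm G f g X v ∂μ := by
    rw [law]
    exact integral_bind_b2r G f g hdeg hf01 hg01 μ v
  have hdet : det G f g (fun w => b2r (x0 w)) (t + 1) v = gam f g (x v) bx := rfl
  rw [hE, hdet]
  set c : ℝ := 1 - f bx - g bx with hc
  have hcabs : |c| ≤ 1 := by
    obtain ⟨h1, h2⟩ := hf01 bx hbxm
    obtain ⟨h3, h4⟩ := hg01 bx hbxm
    rw [abs_le]; constructor <;> [skip; skip] <;> simp only [hc] <;> nlinarith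
  -- decomposition
  have hdecomp : ∀ X : V → Bool, gm G f g X v - gam f g (x v) bx
      = (b2r (X v) - x v) * c +
        (b2r (X v) * (f bx - f (nbrAvg G (fun w => b2r (X w)) v)) +
         (1 - b2r (X v)) * (g (nbrAvg G (fun w => b2r (X w)) v) - g bx)) := by
    intro X
    simp only [gm, gam, hc]
    ring
  have hbYm : ∀ X : V → Bool, nbrAvg G (fun w => b2r (X w)) v ∈ Set.Icc (0:ℝ) 1 :=
    fun X => nbrAvg_mem G (fun w => b2r_mem _) (hdeg v)
  -- remainder bound
  have hrem : ∀ X : V → Bool,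
      |b2r (X v) * (f bx - f (nbrAvg G (fun w => b2r (X w)) v)) +
        (1 - b2r (X v)) * (g (nbrAvg G (fun w => b2r (X w)) v) - g bx)|
      ≤ M * |nbrAvg G (fun w => b2r (X w)) v - bx| := by
    intro X
    set bY := nbrAvg G (fun w => b2r (X w)) v with hbY
    cases hXv : X v
    · have hb : b2r false = 0 := rfl
      rw [hb, zero_mul, zero_add, sub_zero, one_mul]
      exact hgLip bY (hbYm X) bx hbxm
    · have hb : b2r true = 1 := rfl
      rw [hb, one_mul, sub_self, zero_mul, add_zero]
      calc |f bx - f bY| ≤ M * |bx - bY| := hfLip bx hbxm bY (hbYm X)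
        _ = M * |bY - bx| := by rw [abs_sub_comm]
  -- put together
  have hsplit : ∫ X, gm G f g X v ∂μ - gam f g (x v) bx
      = ((∫ y, b2r (y v) ∂μ) - x v) * c +
        ∫ X, (b2r (X v) * (f bx - f (nbrAvg G (fun w => b2r (X w)) v)) +
          (1 - b2r (X v)) * (g (nbrAvg G (fun w => b2r (X w)) v) - g bx)) ∂μ := by
    have h1 : ∫ X, gm G f g X v ∂μ - gam f g (x v) bx
        = ∫ X, (gm G f g X v - gam f g (x v) bx) ∂μ := by
      rw [integral_sub .of_finite (integrable_const _), integral_const]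
      simp
    rw [h1, integral_congr_ae (Filter.Eventually.of_forall hdecomp),
      integral_add .of_finite .of_finite,
      integral_mul_const, integral_sub .of_finite (integrable_const _), integral_const]
    simp
  rw [hsplit]
  calc |((∫ y, b2r (y v) ∂μ) - x v) * c +
        ∫ X, (b2r (X v) * (f bx - f (nbrAvg G (fun w => b2r (X w)) v)) +
          (1 - b2r (X v)) * (g (nbrAvg G (fun w => b2r (X w)) v) - g bx)) ∂μ|
      ≤ |((∫ y, b2r (y v) ∂μ) - x v) * c| +
        |∫ X, (b2r (X v) * (f bx - f (nbrAvg G (fun w => b2r (X w)) v)) +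
          (1 - b2r (X v)) * (g (nbrAvg G (fun w => b2r (X w)) v) - g bx)) ∂μ| :=
        abs_add_le _ _
    _ ≤ |(∫ y, b2r (y v) ∂μ) - x v| + M * ∫ y, |nbrAvg G (fun w => b2r (y w)) v - bx| ∂μ := by
        gcongr ?_ + ?_
        · rw [abs_mul]
          exact mul_le_of_le_one_right (abs_nonneg _) hcabs
        · calc |∫ X, (b2r (X v) * (f bx - f (nbrAvg G (fun w => b2r (X w)) v)) +
              (1 - b2r (X v)) * (g (nbrAvg G (fun w => b2r (X w)) v) - g bx)) ∂μ|
              ≤ ∫ X, |b2r (X v) * (f bx - f (nbrAvg G (fun w => b2r (X w)) v)) +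
                (1 - b2r (X v)) * (g (nbrAvg G (fun w => b2r (X w)) v) - g bx)| ∂μ := by
                simpa [Real.norm_eq_abs] using norm_integral_le_integral_norm (μ := μ)
                  (f := fun X => b2r (X v) * (f bx - f (nbrAvg G (fun w => b2r (X w)) v)) +
                    (1 - b2r (X v)) * (g (nbrAvg G (fun w => b2r (X w)) v) - g bx))
          _ ≤ ∫ X, M * |nbrAvg G (fun w => b2r (X w)) v - bx| ∂μ :=
              integral_mono .of_finite .of_finite hrem
          _ = M * ∫ y, |nbrAvg G (fun w => b2r (y w)) v - bx| ∂μ := integral_const_mul _ _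

end
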